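/- Let S be a nonempty semistable HN datum and let A, B be HN data such that A^∨ slopewise dominates B^∨ (equivalently, rk(A^{≤μ}) ≥ rk(B^{≤μ}) for every μ ∈ ℚ). Then δ(B, S) ≤ δ(A, S). -/

import Mathlib

namespace HN

def slope (v : ℤ × ℤ) : ℚ := (v.2 : ℚ) / (v.1 : ℚ)

def cross (v w : ℤ × ℤ) : ℤ := v.1 * w.2 - v.2 * w.1

def IsHNDatum (E : List (ℤ × ℤ)) : Prop :=
  (∀ v ∈ E, 1 ≤ v.1) ∧ E.Pairwise (fun v w => slope w < slope v)

def rk (E : List (ℤ × ℤ)) : ℤ := (E.map Prod.fst).sum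

def deg (E : List (ℤ × ℤ)) : ℤ := (E.map Prod.snd).sum

def delta (E F : List (ℤ × ℤ)) : ℤ :=
  (E.map fun e => ((F.filter fun f => decide (slope e ≤ slope f)).map fun f => cross e f).sum).sum

def geSlope (E : List (ℤ × ℤ)) (μ : ℚ) : List (ℤ × ℤ) := E.filter fun v => decide (μ ≤ slope v)
def gtSlope (E : List (ℤ × ℤ)) (μ : ℚ) : List (ℤ × ℤ) := E.filter fun v => decide (μ < slope v)
def ltSlope (E : List (ℤ × ℤ)) (μ : ℚ) : List (ℤ × ℤ) := E.filter fun v => decide (slope v < μ)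

def sigmaList (E : List (ℤ × ℤ)) : List ℚ :=
  E.flatMap fun v => List.replicate v.1.toNat (slope v)

def sigmaSlope (E : List (ℤ × ℤ)) (i : ℕ) : ℚ := (sigmaList E).getD (i - 1) 0

def poly (E : List (ℤ × ℤ)) (k : ℕ) : ℚ := ((sigmaList E).take k).sum

def polySum (A B : List (ℤ × ℤ)) (k : ℕ) : ℚ :=
  (((sigmaList A ++ sigmaList B).mergeSort fun a b => decide (b ≤ a)).take k).sum

def SlopewiseDom (E F : List (ℤ × ℤ)) : Prop :=
  ∀ μ : ℚ, rk (geSlope F μ) ≤ rk (geSlope E μ)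

def StrongSlopewiseDom (E F : List (ℤ × ℤ)) : Prop :=
  SlopewiseDom E F ∧ ∀ μ : ℚ, rk (geSlope E μ) = rk (geSlope F μ) → geSlope E μ = geSlope F μ

def dual (E : List (ℤ × ℤ)) : List (ℤ × ℤ) := (E.map fun v => (v.1, -v.2)).reverse

def HNleSum (E A B : List (ℤ × ℤ)) : Prop :=
  rk E = rk A + rk B ∧ deg E = deg A + deg B ∧
    ∀ k : ℕ, (k : ℤ) ≤ rk E → poly E k ≤ polySum A B k

def HasVertex (V : List (ℤ × ℤ)) (j : ℕ) : Prop :=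
  (j : ℤ) = rk V ∨ sigmaSlope V (j + 1) < sigmaSlope V j

-- helper lemmas
lemma sum_map_filter (l : List (ℤ×ℤ)) (p : ℤ×ℤ → Bool) (f : ℤ×ℤ → ℤ) :
    ((l.filter p).map f).sum = (l.map fun a => if p a then f a else 0).sum := by
  induction l with
  | nil => simp
  | cons a l ih => by_cases h : p a <;> simp [List.filter_cons, h, ih]

lemma sum_swap' (l : List (ℤ×ℤ)) (s : Finset ℤ) (f : ℤ×ℤ → ℤ → ℤ) :
    (l.map fun a => ∑ k ∈ s, f a k).sum = ∑ k ∈ s, (l.map fun a => f a k).sum := by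
  induction l with
  | nil => simp
  | cons a l ih => simp [ih, Finset.sum_add_distrib]

lemma mul_list_sum (c : ℤ) (l : List (ℤ×ℤ)) (f : ℤ×ℤ → ℤ) :
    c * (l.map f).sum = (l.map fun a => c * f a).sum := by
  induction l with
  | nil => simp
  | cons a l ih => simp [ih, mul_add]

lemma foldr_min_le (g : ℤ×ℤ → ℤ) (i : ℤ) (l : List (ℤ×ℤ)) :
    ∀ a ∈ l, l.foldr (fun x m => min (g x) m) i ≤ g a := by
  induction l with
  | nil => simp
  | cons b l ih =>
      intro a ha
      rcases List.mem_cons.1 ha with rfl | ha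
      · exact min_le_left _ _
      · exact le_trans (min_le_right _ _) (ih a ha)

lemma rk_geSlope_dual (E : List (ℤ×ℤ)) (q : ℚ) :
    rk (geSlope (dual E) (-q)) = (E.map fun e => if slope e ≤ q then e.1 else 0).sum := by
  have hh := sum_map_filter E (fun e => decide (slope e ≤ q)) Prod.fst
  simp only [decide_eq_true_eq] at hh
  rw [← hh]
  simp only [rk, geSlope, dual, List.filter_reverse, List.map_reverse, List.sum_reverse]
  rw [List.filter_map]
  have : ((fun v => decide (-q ≤ slope v)) ∘ fun v : ℤ×ℤ => (v.1, -v.2)) =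
      fun e => decide (slope e ≤ q) := by
    funext e
    simp only [Function.comp]
    rw [decide_eq_decide]
    have hsl : slope (e.1, -e.2) = -slope e := by
      simp [slope, neg_div]
    rw [hsl]
    constructor
    · intro h; linarith
    · intro h; linarith
  rw [this, List.map_map]
  rfl

/-- If A^∨ slopewise dominates B^∨ then δ(B,S) ≤ δ(A,S) for S nonempty semistable. -/
theorem statement14 (S A B : List (ℤ × ℤ))
    (hS : IsHNDatum S) (hA : IsHNDatum A) (hB : IsHNDatum B)
    (hSne : S ≠ []) (hSss : S.length ≤ 1)
    (h : SlopewiseDom (dual A) (dual B)) :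
    delta B S ≤ delta A S := by
  -- S is a singleton
  have hlen : S.length = 1 := le_antisymm hSss (by
    cases S with
    | nil => exact absurd rfl hSne
    | cons a l => simp)
  obtain ⟨s, rfl⟩ := List.length_eq_one_iff.1 hlen
  have hs1 : 1 ≤ s.1 := hS.1 s (by simp)
  -- the common denominator N
  set P : ℤ := ((A ++ B).map Prod.fst).prod with hPdef
  have hpos : ∀ e ∈ A ++ B, 1 ≤ e.1 := by
    intro e he
    rcases List.mem_append.1 he with he | he
    · exact hA.1 e he
    · exact hB.1 e he
  have hP : 0 < P := by
    apply List.prod_pos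
    intro a ha
    obtain ⟨f, hf, hfe⟩ := List.mem_map.1 ha
    rw [← hfe]
    exact lt_of_lt_of_le one_pos (hpos f hf)
  set N : ℤ := s.1 * P with hNdef
  have hs0 : (0:ℤ) < s.1 := lt_of_lt_of_le one_pos hs1
  have hN : 0 < N := mul_pos hs0 hP
  have hNQ : (0:ℚ) < (N:ℚ) := by exact_mod_cast hN
  have hdvd : ∀ e ∈ A ++ B, e.1 ∣ N := by
    intro e he
    exact Dvd.dvd.mul_left (List.dvd_prod (List.mem_map_of_mem (f := Prod.fst) he)) s.1
  have hsdvd : s.1 ∣ N := Dvd.intro P rfl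
  set n : ℤ×ℤ → ℤ := fun e => N / e.1 * e.2 with hndef
  have key1 : ∀ e : ℤ×ℤ, e.1 ∣ N → e.1 * n e = N * e.2 := by
    intro e hd
    show e.1 * (N / e.1 * e.2) = N * e.2
    rw [← mul_assoc, Int.mul_ediv_cancel' hd]
  have key2 : ∀ e : ℤ×ℤ, 1 ≤ e.1 → e.1 ∣ N → (n e : ℚ) = (N : ℚ) * slope e := by
    intro e h1 hd
    have h0 : (e.1 : ℚ) ≠ 0 := Int.cast_ne_zero.2 (by omega)
    have hc : (e.1 : ℚ) * (n e : ℚ) = (N:ℚ) * (e.2:ℚ) := by exact_mod_cast key1 e hd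
    rw [slope]
    field_simp
    linarith [hc]
  have cond : ∀ e : ℤ×ℤ, 1 ≤ e.1 → e.1 ∣ N → ∀ μ : ℚ, (slope e ≤ μ ↔ (n e : ℚ) ≤ (N:ℚ) * μ) := by
    intro e h1 hd μ
    rw [key2 e h1 hd]
    exact (mul_le_mul_iff_of_pos_left hNQ).symm
  have hns : (n s : ℚ) = (N:ℚ) * slope s := key2 s hs1 hsdvd
  have conds : ∀ e ∈ A ++ B, (slope e ≤ slope s ↔ n e ≤ n s) := by
    intro e he
    rw [cond e (hpos e he) (hdvd e he) (slope s), ← hns, Int.cast_le]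
  have condk : ∀ e ∈ A ++ B, ∀ k : ℤ, (slope e ≤ (k : ℚ)/(N:ℚ) ↔ n e ≤ k) := by
    intro e he k
    rw [cond e (hpos e he) (hdvd e he), mul_div_cancel₀ _ (ne_of_gt hNQ), Int.cast_le]
  set L : ℤ := (A ++ B).foldr (fun x m => min (n x) m) (n s) with hLdef
  have hL : ∀ e ∈ A ++ B, L ≤ n e := foldr_min_le n (n s) (A ++ B)
  -- the key identity
  have hdelta : ∀ E : List (ℤ×ℤ), (∀ e ∈ E, e ∈ A ++ B) →
      N * delta E [s] =
        s.1 * ∑ k ∈ Finset.Ico L (n s), (E.map fun e => if n e ≤ k then e.1 else 0).sum := by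
    intro E hmem
    have hd1 : delta E [s] = (E.map fun e => if slope e ≤ slope s then cross e s else 0).sum := by
      unfold delta
      congr 1
      apply List.map_congr_left
      intro e _
      by_cases hc : slope e ≤ slope s <;> simp [List.filter_cons, hc]
    rw [hd1, mul_list_sum, ← sum_swap', mul_list_sum]
    congr 1
    apply List.map_congr_left
    intro e he
    have h1 := hpos e (hmem e he)
    have hd := hdvd e (hmem e he)
    have hLe := hL e (hmem e he)
    have hcross : s.1 * (e.1 * (n s - n e)) = N * cross e s := by
      have hke := key1 e hd
      have hks := key1 s hsdvd
      unfold cross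
      linear_combination e.1 * hks - s.1 * hke
    have hsum : ∑ k ∈ Finset.Ico L (n s), (if n e ≤ k then e.1 else 0) = e.1 * max (n s - n e) 0 := by
      rw [← Finset.sum_filter, Finset.Ico_filter_le, max_eq_right hLe, Finset.sum_const,
        Int.card_Ico, nsmul_eq_mul, Int.toNat_eq_max, mul_comm]
    rw [hsum]
    by_cases hc : slope e ≤ slope s
    · have hnn : n e ≤ n s := (conds e (hmem e he)).1 hc
      rw [if_pos hc, max_eq_left (sub_nonneg.2 hnn)]
      linarith [hcross]
    · have hnn : ¬ n e ≤ n s := fun hh => hc ((conds e (hmem e he)).2 hh)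
      rw [if_neg hc, max_eq_right (by omega : n s - n e ≤ 0)]
      ring
  -- pointwise comparison from the hypothesis
  have hcmp : ∀ k : ℤ, (B.map fun e => if n e ≤ k then e.1 else 0).sum ≤
      (A.map fun e => if n e ≤ k then e.1 else 0).sum := by
    intro k
    have hq := h (-((k:ℚ) / (N:ℚ)))
    rw [rk_geSlope_dual A ((k:ℚ)/(N:ℚ)), rk_geSlope_dual B ((k:ℚ)/(N:ℚ))] at hq
    have hBc : (B.map fun e => if slope e ≤ (k:ℚ)/(N:ℚ) then e.1 else 0)
        = (B.map fun e => if n e ≤ k then e.1 else 0) := by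
      apply List.map_congr_left
      intro e he
      exact if_congr (condk e (List.mem_append_right A he) k) rfl rfl
    have hAc : (A.map fun e => if slope e ≤ (k:ℚ)/(N:ℚ) then e.1 else 0)
        = (A.map fun e => if n e ≤ k then e.1 else 0) := by
      apply List.map_congr_left
      intro e he
      exact if_congr (condk e (List.mem_append_left B he) k) rfl rfl
    rw [hBc, hAc] at hq
    exact hq
  have hfin : N * delta B [s] ≤ N * delta A [s] := by
    rw [hdelta B (fun e he => List.mem_append_right A he),
      hdelta A (fun e he => List.mem_append_left B he)]
    exact mul_le_mul_of_nonneg_left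
      (Finset.sum_le_sum fun k _ => hcmp k) (le_of_lt hs0)
  exact le_of_mul_le_mul_left hfin hN

end HN
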